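/- For every x ∈ F, every c ∈ ℤ₃ and every n ∈ ℤ, one has rep(2^n·(x + (0,0,c))) = rep(2^n·x) + (0, 0, 2^n·c), where 2^n·c ∈ ℤ₃ since 2 is a unit in ℤ₃. Consequently, for c ≠ 0 the distinct points x and x + (0,0,c) of F lie in the same atom of the partition ξ^{(1,0)} = {[0,1/2) × ℤ₂ × ℤ₃, [1/2,1) × ℤ₂ × ℤ₃} under every iterate (forward and backward) of multiplication by 2 on G/Γ; in particular ξ^{(1,0)} is not generating for multiplication by 2. -/

import Mathlib

open Set

noncomputable section

/-- The ambient group `G = ℝ × ℚ₂ × ℚ₃`. -/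
abbrev G : Type := ℝ × ℚ_[2] × ℚ_[3]

/-- The diagonal embedding of `ℚ` into `G`. -/
def Δ (r : ℚ) : G := ((r : ℝ), (r : ℚ_[2]), (r : ℚ_[3]))

/-- `ℤ[1/6]`, the rationals expressible with denominator `6^k`. -/
def zInv6 : Set ℚ := {q | ∃ (z : ℤ) (k : ℕ), q = z / 6 ^ k}

/-- `Γ = Δ(ℤ[1/6])`. -/
def Γ : Set G := Δ '' zInv6

/-- The fundamental domain `F = [0,1) × ℤ₂ × ℤ₃`. -/
def F : Set G := {x | x.1 ∈ Set.Ico (0 : ℝ) 1 ∧ ‖x.2.1‖ ≤ 1 ∧ ‖x.2.2‖ ≤ 1}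

/-- Coordinatewise multiplication by a rational on `G`. -/
def act (q : ℚ) (x : G) : G :=
  ((q : ℝ) * x.1, (q : ℚ_[2]) * x.2.1, (q : ℚ_[3]) * x.2.2)

/-- If a rational has `p`-adic norm at most one, `p` does not divide its denominator. -/
lemma not_dvd_den_of_norm_le_one {p : ℕ} [hp : Fact p.Prime] {q : ℚ}
    (h : ‖(q : ℚ_[p])‖ ≤ 1) : ¬ p ∣ q.den := by
  intro hdvd
  rcases eq_or_ne q 0 with rfl | hq
  · exact hp.out.one_lt.ne' (Nat.dvd_one.mp (by simpa using hdvd))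
  · rw [Padic.eq_padicNorm, padicNorm.eq_zpow_of_nonzero hq] at h
    have hp1 : (1 : ℚ) < (p : ℚ) := by exact_mod_cast hp.out.one_lt
    have h' : (p : ℚ) ^ (-padicValRat p q) ≤ 1 := by exact_mod_cast h
    have hval : 0 ≤ padicValRat p q := by
      by_contra hneg
      push_neg at hneg
      have : (1 : ℚ) < (p : ℚ) ^ (-padicValRat p q) :=
        one_lt_zpow₀ hp1 (by omega)
      linarith
    rw [padicValRat_def] at hval
    have hnum : padicValInt p q.num = 0 := by
      apply padicValInt.eq_zero_of_not_dvd
      intro hdn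
      have h1 : p ∣ q.num.natAbs := Int.natCast_dvd_natCast.mp (by
        simpa using (Int.dvd_natAbs.mpr hdn))
      have h2 : p ∣ Nat.gcd q.num.natAbs q.den := Nat.dvd_gcd h1 hdvd
      rw [q.reduced] at h2
      exact hp.out.one_lt.ne' (Nat.dvd_one.mp h2)
    have hden : 1 ≤ padicValNat p q.den :=
      one_le_padicValNat_of_dvd q.pos.ne' hdvd
    omega

/-- `Γ` is closed under subtraction. -/
lemma Gamma_sub {a b : G} (ha : a ∈ Γ) (hb : b ∈ Γ) : a - b ∈ Γ := by
  obtain ⟨q1, ⟨z1, k1, hz1⟩, rfl⟩ := ha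
  obtain ⟨q2, ⟨z2, k2, hz2⟩, rfl⟩ := hb
  refine ⟨q1 - q2, ⟨z1 * 6 ^ k2 - z2 * 6 ^ k1, k1 + k2, ?_⟩, ?_⟩
  · subst hz1 hz2
    have h1 : ((6 : ℚ)) ^ k1 ≠ 0 := by positivity
    have h2 : ((6 : ℚ)) ^ k2 ≠ 0 := by positivity
    field_simp
    push_cast
    ring
  · simp [Δ, Prod.ext_iff]

/-- A nonarchimedean bound for differences in `ℚ_[p]`. -/
lemma padic_sub_le {p : ℕ} [Fact p.Prime] (a b : ℚ_[p]) :
    ‖a - b‖ ≤ max ‖a‖ ‖b‖ := by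
  rw [sub_eq_add_neg]
  simpa [norm_neg] using Padic.nonarchimedean a (-b)

/-- Two elements of `F` that differ by an element of `Γ` are equal. -/
lemma F_unique {y z : G} (hy : y ∈ F) (hz : z ∈ F) (h : y - z ∈ Γ) : y = z := by
  obtain ⟨q, ⟨m, k, hq⟩, hΔ⟩ := h
  obtain ⟨⟨hy0, hy1⟩, hy2, hy3⟩ := hy
  obtain ⟨⟨hz0, hz1⟩, hz2, hz3⟩ := hz
  have h1 : (q : ℝ) = y.1 - z.1 := congrArg Prod.fst hΔ
  have h2 : (q : ℚ_[2]) = y.2.1 - z.2.1 := congrArg (fun w => w.2.1) hΔ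
  have h3 : (q : ℚ_[3]) = y.2.2 - z.2.2 := congrArg (fun w => w.2.2) hΔ
  have hq2 : ‖(q : ℚ_[2])‖ ≤ 1 := by
    rw [h2]; exact (padic_sub_le _ _).trans (max_le hy2 hz2)
  have hq3 : ‖(q : ℚ_[3])‖ ≤ 1 := by
    rw [h3]; exact (padic_sub_le _ _).trans (max_le hy3 hz3)
  have hd2 : ¬ (2 : ℕ) ∣ q.den := not_dvd_den_of_norm_le_one hq2
  have hd3 : ¬ (3 : ℕ) ∣ q.den := not_dvd_den_of_norm_le_one hq3
  have hden_dvd : (q.den : ℤ) ∣ (6 : ℤ) ^ k := by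
    have : q = Rat.divInt m (6 ^ k) := by
      rw [Rat.divInt_eq_div, hq]; push_cast; ring
    rw [this]
    exact Rat.den_dvd m (6 ^ k)
  have hden_dvd' : q.den ∣ 6 ^ k := by
    have h6 : (q.den : ℤ) ∣ ((6 ^ k : ℕ) : ℤ) := by exact_mod_cast hden_dvd
    exact_mod_cast h6
  have hcop : Nat.Coprime q.den (6 ^ k) := by
    apply Nat.Coprime.pow_right
    have c2 : Nat.Coprime q.den 2 :=
      ((Nat.Prime.coprime_iff_not_dvd Nat.prime_two).mpr hd2).symm
    have c3 : Nat.Coprime q.den 3 :=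
      ((Nat.Prime.coprime_iff_not_dvd Nat.prime_three).mpr hd3).symm
    have h6 : (6 : ℕ) = 2 * 3 := rfl
    rw [h6]
    exact Nat.Coprime.mul_right c2 c3
  have hden1 : q.den = 1 := Nat.Coprime.eq_one_of_dvd hcop hden_dvd'
  have hqint : q = (q.num : ℚ) := by
    conv_lhs => rw [← Rat.num_div_den q]
    rw [hden1]; simp
  have habs : |(q : ℝ)| < 1 := by
    rw [h1, abs_lt]; constructor <;> linarith
  rw [← Rat.cast_abs] at habs
  have habsq : |q| < 1 := by exact_mod_cast habs
  rw [hqint] at habsq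
  have hnum : |q.num| < 1 := by exact_mod_cast habsq
  have hzero : q.num = 0 := by
    rcases abs_lt.mp hnum with ⟨ha, hb⟩; omega
  have hq0 : q = 0 := by rw [hqint, hzero]; simp
  rw [hq0] at hΔ
  have h0 : y - z = 0 := by
    rw [← hΔ]; simp [Δ, Prod.ext_iff]
  exact sub_eq_zero.mp h0

lemma two_norm_eq_one : ‖(2 : ℚ_[3])‖ = 1 := by
  have hle : ‖((2 : ℤ) : ℚ_[3])‖ ≤ 1 := Padic.norm_int_le_one 2
  have hlt : ¬ ‖((2 : ℤ) : ℚ_[3])‖ < 1 := by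
    rw [Padic.norm_intCast_lt_one_iff]
    decide
  have h : ‖((2 : ℤ) : ℚ_[3])‖ = 1 := le_antisymm hle (not_lt.mp hlt)
  simpa using h

/-- All iterates of multiplication by `2` on `G/Γ` commute with translation by
`(0,0,c)` for `c ∈ ℤ₃`: `rep(2^n(x+(0,0,c))) = rep(2^n x) + (0,0,2^n c)`.
Consequently, for `c ≠ 0` the distinct points `x` and `x+(0,0,c)` of `F` lie in the
same atom of `ξ^{(1,0)} = {[0,1/2) × ℤ₂ × ℤ₃, [1/2,1) × ℤ₂ × ℤ₃}` under every forward
and backward iterate of multiplication by `2`; in particular `ξ^{(1,0)}` is not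
generating for multiplication by `2`. -/
theorem xi_one_zero_not_generating (rep : G → G)
    (hrep : ∀ x : G, rep x ∈ F ∧ x - rep x ∈ Γ)
    (x : G) (hx : x ∈ F) (c : ℚ_[3]) (hc : ‖c‖ ≤ 1) :
    (∀ n : ℤ, rep (act ((2 : ℚ) ^ n) (x + ((0 : ℝ), (0 : ℚ_[2]), c))) =
      rep (act ((2 : ℚ) ^ n) x) + ((0 : ℝ), (0 : ℚ_[2]), (2 : ℚ_[3]) ^ n * c)) ∧
    (c ≠ 0 →
      x + ((0 : ℝ), (0 : ℚ_[2]), c) ∈ F ∧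
      x + ((0 : ℝ), (0 : ℚ_[2]), c) ≠ x ∧
      ∀ n : ℤ,
        ((rep (act ((2 : ℚ) ^ n) (x + ((0 : ℝ), (0 : ℚ_[2]), c)))).1 < 1 / 2 ↔
          (rep (act ((2 : ℚ) ^ n) x)).1 < 1 / 2)) := by
  have key : ∀ n : ℤ, rep (act ((2 : ℚ) ^ n) (x + ((0 : ℝ), (0 : ℚ_[2]), c))) =
      rep (act ((2 : ℚ) ^ n) x) + ((0 : ℝ), (0 : ℚ_[2]), (2 : ℚ_[3]) ^ n * c) := by
    intro n
    obtain ⟨hyF, hyΓ⟩ := hrep (act ((2 : ℚ) ^ n) x)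
    obtain ⟨hwF, hwΓ⟩ := hrep (act ((2 : ℚ) ^ n) (x + ((0 : ℝ), (0 : ℚ_[2]), c)))
    set y := rep (act ((2 : ℚ) ^ n) x) with hy
    set w := rep (act ((2 : ℚ) ^ n) (x + ((0 : ℝ), (0 : ℚ_[2]), c))) with hw
    set v : G := ((0 : ℝ), (0 : ℚ_[2]), (2 : ℚ_[3]) ^ n * c) with hv
    have hnc : ‖(2 : ℚ_[3]) ^ n * c‖ ≤ 1 := by
      rw [norm_mul, norm_zpow, two_norm_eq_one, one_zpow, one_mul]; exact hc
    have hzF : y + v ∈ F := by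
      obtain ⟨hy1, hy2, hy3⟩ := hyF
      refine ⟨by simpa [hv] using hy1, by simpa [hv] using hy2, ?_⟩
      have : (y + v).2.2 = y.2.2 + (2 : ℚ_[3]) ^ n * c := rfl
      rw [this, ← sub_neg_eq_add]
      exact (padic_sub_le _ _).trans (max_le hy3 (by simpa using hnc))
    have hcast : (((2 : ℚ) ^ n : ℚ) : ℚ_[3]) = (2 : ℚ_[3]) ^ n := by
      push_cast; ring
    have hdiff : act ((2 : ℚ) ^ n) (x + ((0 : ℝ), (0 : ℚ_[2]), c)) - (y + v) =
        act ((2 : ℚ) ^ n) x - y := by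
      simp only [act, hv, Prod.ext_iff, Prod.fst_add, Prod.snd_add,
        Prod.fst_sub, Prod.snd_sub]
      refine ⟨by ring, by ring, ?_⟩
      show (((2 : ℚ) ^ n : ℚ) : ℚ_[3]) * (x.2.2 + c) - (y.2.2 + (2 : ℚ_[3]) ^ n * c) =
        (((2 : ℚ) ^ n : ℚ) : ℚ_[3]) * x.2.2 - y.2.2
      rw [hcast]; ring
    have hΓ : w - (y + v) ∈ Γ := by
      have heq : w - (y + v) =
          (act ((2 : ℚ) ^ n) x - y) -
          (act ((2 : ℚ) ^ n) (x + ((0 : ℝ), (0 : ℚ_[2]), c)) - w) := by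
        rw [← hdiff]; abel
      rw [heq]
      exact Gamma_sub hyΓ hwΓ
    exact F_unique hwF hzF hΓ
  refine ⟨key, fun hc0 => ⟨?_, ?_, ?_⟩⟩
  · obtain ⟨hx1, hx2, hx3⟩ := hx
    refine ⟨by simpa using hx1, by simpa using hx2, ?_⟩
    have : (x + ((0 : ℝ), (0 : ℚ_[2]), c)).2.2 = x.2.2 + c := rfl
    rw [this, ← sub_neg_eq_add]
    exact (padic_sub_le _ _).trans (max_le hx3 (by simpa using hc))
  · intro h
    have h3 : x.2.2 + c = x.2.2 := by
      simpa using congrArg (fun w : G => w.2.2) h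
    exact hc0 (add_eq_left.mp h3)
  · intro n
    rw [key n]
    simp
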